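/- arXiv:2203.04593 — 5 statements merged into one kernel-verified Lean document; each statement's English description precedes it below -/
import Mathlib

section
/- Let U be a real normed space, let λ_1,…,λ_M ∈ U* and μ ∈ U* be continuous linear functionals. Suppose d := inf over all coefficient vectors c ∈ ℝ^M of ‖μ − Σ_{j=1}^M c_j·λ_j‖_{U*} is strictly positive. Then every bump function f ∈ U for μ (i.e. μ(f) = 1 and λ_j(f) = 0 for all j) satisfies ‖f‖_U ≥ 1/d; that is, the best possible power function bounds from below the reciprocal of the best possible bump-function norm. -/
/-- If the best possible power function value
`d = inf_{c ∈ ℝ^M} ‖μ - ∑ j, c j • lam j‖` is strictly positive, then every bump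
function `f` for `μ` (with `μ f = 1` and `lam j f = 0` for all `j`) satisfies
`‖f‖ ≥ 1 / d`. -/
theorem best_power_function_bounds_bump_norm
    {U : Type*} [NormedAddCommGroup U] [NormedSpace ℝ U]
    (M : ℕ) (lam : Fin M → (U →L[ℝ] ℝ)) (μ : U →L[ℝ] ℝ)
    (d : ℝ) (hd : d = ⨅ c : Fin M → ℝ, ‖μ - ∑ j, c j • lam j‖)
    (hdpos : 0 < d)
    (f : U) (hμf : μ f = 1) (hlamf : ∀ j, lam j f = 0) :
    1 / d ≤ ‖f‖ := by
  have hf : 0 < ‖f‖ := by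
    rcases eq_or_ne f 0 with h | h
    · exfalso; simp [h] at hμf
    · exact norm_pos_iff.mpr h
  have key : ∀ c : Fin M → ℝ, 1 / ‖f‖ ≤ ‖μ - ∑ j, c j • lam j‖ := by
    intro c
    have happ : (μ - ∑ j, c j • lam j) f = 1 := by
      simp [ContinuousLinearMap.sub_apply, ContinuousLinearMap.sum_apply, hμf, hlamf]
    have := (μ - ∑ j, c j • lam j).le_opNorm f
    rw [happ] at this
    simp only [norm_one] at this
    rw [div_le_iff₀ hf]
    exact this
  have hle : 1 / ‖f‖ ≤ d := by
    rw [hd]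
    exact le_ciInf key
  rw [div_le_iff₀ hdpos]
  calc 1 = (1 / ‖f‖) * ‖f‖ := by field_simp
    _ ≤ d * ‖f‖ := by gcongr
    _ = ‖f‖ * d := mul_comm _ _
end

section
/- Let U be a real normed space, let λ_1,…,λ_M ∈ U* be continuous linear functionals and u_1,…,u_M ∈ U elements with the Lagrange (Kronecker) property λ_k(u_j) = δ_{jk} for all 1 ≤ j,k ≤ M, and let R(f) = Σ_{j=1}^M λ_j(f)·u_j be the associated interpolatory recovery map. Assume the bounded-error property ‖f − R(f)‖_U ≤ ‖f‖_U for all f ∈ U. Then for every μ ∈ U*: sup over f ∈ U with ‖f‖_U ≤ 1 of |μ(f) − μ(R(f))| equals sup over g ∈ U with ‖g‖_U ≤ 1 and λ_j(g) = 0 for all j of |μ(g)|. -/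
/-- For an interpolatory recovery `R f = ∑ j, lam j f • u j` (Lagrange property
`lam k (u j) = δ_{jk}`) with the bounded-error property `‖f - R f‖ ≤ ‖f‖`, the
power function of `μ` equals the supremum of `|μ g|` over the unit ball of
functions with vanishing data. -/
theorem power_function_eq_sup_over_vanishing_data
    {U : Type*} [NormedAddCommGroup U] [NormedSpace ℝ U]
    (M : ℕ) (lam : Fin M → (U →L[ℝ] ℝ)) (u : Fin M → U)
    (hLag : ∀ j k, lam k (u j) = if j = k then 1 else 0)
    (hbe : ∀ f : U, ‖f - ∑ j, lam j f • u j‖ ≤ ‖f‖)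
    (μ : U →L[ℝ] ℝ) :
    sSup {r : ℝ | ∃ f : U, ‖f‖ ≤ 1 ∧ r = |μ f - μ (∑ j, lam j f • u j)|}
      = sSup {r : ℝ | ∃ g : U, ‖g‖ ≤ 1 ∧ (∀ j, lam j g = 0) ∧ r = |μ g|} := by
  congr 1
  ext r
  constructor
  · rintro ⟨f, hf, rfl⟩
    refine ⟨f - ∑ j, lam j f • u j, le_trans (hbe f) hf, ?_, ?_⟩
    · intro k
      simp [map_sub, map_sum, map_smul, hLag, smul_eq_mul, Finset.sum_ite_eq']
    · simp [map_sub]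
  · rintro ⟨g, hg, hvan, rfl⟩
    refine ⟨g, hg, ?_⟩
    simp [hvan]
end

section
/- Let U be a real normed space, let λ_1,…,λ_M ∈ U* be continuous linear functionals and u_1,…,u_M ∈ U elements with λ_k(u_j) = δ_{jk}, and let R(f) = Σ_{j=1}^M λ_j(f)·u_j be the associated interpolatory recovery map. Assume the bounded-error property ‖f − R(f)‖_U ≤ ‖f‖_U for all f ∈ U. Let μ ∈ U* admit at least one bump function (some f₀ ∈ U with μ(f₀) = 1 and λ_j(f₀) = 0 for all j). Then the trade-off principle holds with equality: (sup over ‖f‖_U ≤ 1 of |μ(f) − μ(R(f))|) · (inf over all bump functions f of ‖f‖_U) = 1. -/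
/-- Trade-off principle with equality: for an interpolatory recovery
`R f = ∑ j, lam j f • u j` with the bounded-error property, if `μ` admits a bump
function, then the power function of `μ` times the minimal norm of a bump
function for `μ` equals `1`. -/
theorem trade_off_principle_with_equality
    {U : Type*} [NormedAddCommGroup U] [NormedSpace ℝ U]
    (M : ℕ) (lam : Fin M → (U →L[ℝ] ℝ)) (u : Fin M → U)
    (hLag : ∀ j k, lam k (u j) = if j = k then 1 else 0)
    (hbe : ∀ f : U, ‖f - ∑ j, lam j f • u j‖ ≤ ‖f‖)
    (μ : U →L[ℝ] ℝ)
    (f₀ : U) (hμf₀ : μ f₀ = 1) (hlamf₀ : ∀ j, lam j f₀ = 0) :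
    sSup {r : ℝ | ∃ f : U, ‖f‖ ≤ 1 ∧ r = |μ f - μ (∑ j, lam j f • u j)|}
      * sInf {r : ℝ | ∃ f : U, μ f = 1 ∧ (∀ j, lam j f = 0) ∧ r = ‖f‖} = 1 := by
  set S : Set ℝ := {r : ℝ | ∃ f : U, ‖f‖ ≤ 1 ∧ r = |μ f - μ (∑ j, lam j f • u j)|} with hSdef
  set T : Set ℝ := {r : ℝ | ∃ f : U, μ f = 1 ∧ (∀ j, lam j f = 0) ∧ r = ‖f‖} with hTdef
  -- the residual g = f - R f is annihilated by every lam k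
  have hlamres : ∀ (f : U) (k : Fin M), lam k (f - ∑ j, lam j f • u j) = 0 := by
    intro f k
    rw [map_sub, map_sum]
    simp only [map_smul, smul_eq_mul, hLag, mul_ite, mul_one, mul_zero]
    simp
  -- μ is nonzero, so every bump has norm ≥ ‖μ‖⁻¹ > 0
  have hμpos : (0:ℝ) < ‖μ‖ := by
    have hne : μ ≠ 0 := by intro h; simp [h] at hμf₀
    exact norm_pos_iff.mpr hne
  have hTlb : ∀ r ∈ T, ‖μ‖⁻¹ ≤ r := by
    rintro r ⟨f, hμf, _, rfl⟩
    have h1 : (1:ℝ) ≤ ‖μ‖ * ‖f‖ := by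
      have := μ.le_opNorm f
      rw [hμf] at this
      simpa using this
    have h2 : ‖μ‖⁻¹ * 1 ≤ ‖μ‖⁻¹ * (‖μ‖ * ‖f‖) :=
      mul_le_mul_of_nonneg_left h1 (by positivity)
    rwa [mul_one, ← mul_assoc, inv_mul_cancel₀ (ne_of_gt hμpos), one_mul] at h2
  have hTne : T.Nonempty := ⟨‖f₀‖, f₀, hμf₀, hlamf₀, rfl⟩
  have hTbdd : BddBelow T := ⟨‖μ‖⁻¹, hTlb⟩
  set m := sInf T with hm
  have hmpos : 0 < m := lt_of_lt_of_le (inv_pos.mpr hμpos) (le_csInf hTne hTlb)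
  -- upper bound for S: every element of S is ≤ 1/m
  have hSub : ∀ r ∈ S, r ≤ 1 / m := by
    rintro r ⟨f, hf1, rfl⟩
    set g := f - ∑ j, lam j f • u j with hg
    have hμg : μ f - μ (∑ j, lam j f • u j) = μ g := by rw [hg, map_sub]
    rw [hμg]
    by_cases hc : μ g = 0
    · rw [hc, abs_zero]; positivity
    · -- (μ g)⁻¹ • g is a bump
      have hmem : ‖(μ g)⁻¹ • g‖ ∈ T := by
        refine ⟨(μ g)⁻¹ • g, ?_, ?_, rfl⟩
        · simp [map_smul, inv_mul_cancel₀ hc]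
        · intro j; simp [map_smul, hlamres f j, hg]
      have hmle : m ≤ ‖(μ g)⁻¹ • g‖ := csInf_le hTbdd hmem
      have hgnorm : ‖g‖ ≤ 1 := le_trans (hbe f) hf1
      have : m ≤ |μ g|⁻¹ := by
        calc m ≤ ‖(μ g)⁻¹ • g‖ := hmle
        _ = |μ g|⁻¹ * ‖g‖ := by rw [norm_smul]; simp [abs_inv]
        _ ≤ |μ g|⁻¹ * 1 := by
            apply mul_le_mul_of_nonneg_left hgnorm (by positivity)
        _ = |μ g|⁻¹ := mul_one _
      rw [le_inv_comm₀ hmpos (abs_pos.mpr hc)] at this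
      rw [one_div]
      exact this
  have hSne : S.Nonempty := by
    refine ⟨0, 0, by simp, ?_⟩
    simp
  have hSbdd : BddAbove S := ⟨1 / m, hSub⟩
  set s := sSup S with hs
  have hsle : s ≤ 1 / m := csSup_le hSne hSub
  -- lower bound : for any bump f, 1/‖f‖ ∈ S
  have hSmem : ∀ f : U, μ f = 1 → (∀ j, lam j f = 0) → (1 / ‖f‖) ∈ S := by
    intro f hμf hlf
    have hfne : f ≠ 0 := by rintro rfl; simp at hμf
    have hfpos : 0 < ‖f‖ := norm_pos_iff.mpr hfne
    refine ⟨‖f‖⁻¹ • f, ?_, ?_⟩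
    · rw [norm_smul]
      simp [abs_inv, abs_of_pos hfpos, inv_mul_cancel₀ (ne_of_gt hfpos)]
    · have hls : ∀ j, lam j (‖f‖⁻¹ • f) = 0 := by
        intro j; simp [map_smul, hlf j]
      have hsum : (∑ j, lam j (‖f‖⁻¹ • f) • u j) = 0 := by
        simp [hls]
      rw [hsum]
      simp [map_smul, hμf, abs_of_pos (inv_pos.mpr hfpos), one_div]
  have hspos : 0 < s := by
    have h0 : ‖f₀‖ ≠ 0 := by
      rintro h; have : f₀ = 0 := norm_eq_zero.mp h; simp [this] at hμf₀
    have hf0pos : 0 < ‖f₀‖ := lt_of_le_of_ne (norm_nonneg _) (Ne.symm h0)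
    have : 1 / ‖f₀‖ ≤ s := le_csSup hSbdd (hSmem f₀ hμf₀ hlamf₀)
    have : 0 < 1 / ‖f₀‖ := by positivity
    linarith [le_csSup hSbdd (hSmem f₀ hμf₀ hlamf₀)]
  -- every bump norm is ≥ 1/s, hence m ≥ 1/s
  have hmge : 1 / s ≤ m := by
    apply le_csInf hTne
    rintro r ⟨f, hμf, hlf, rfl⟩
    have hfne : f ≠ 0 := by rintro rfl; simp at hμf
    have hfpos : 0 < ‖f‖ := norm_pos_iff.mpr hfne
    have h1 : 1 / ‖f‖ ≤ s := le_csSup hSbdd (hSmem f hμf hlf)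
    rw [div_le_iff₀ hfpos] at h1
    rw [div_le_iff₀ hspos]
    linarith [h1]
  -- combine
  have h1 : s * m ≤ 1 := by
    have := mul_le_mul_of_nonneg_right hsle (le_of_lt hmpos)
    rwa [one_div, inv_mul_cancel₀ (ne_of_gt hmpos)] at this
  have h2 : 1 ≤ s * m := by
    have := mul_le_mul_of_nonneg_left hmge (le_of_lt hspos)
    rwa [one_div, mul_inv_cancel₀ (ne_of_gt hspos)] at this
  linarith
end

section
/- Let a < x < b be real numbers. Then sup over all functions f : ℝ → ℝ that are 1-Lipschitz on [a, b] of |f(x) − ((b−x)·f(a) + (x−a)·f(b))/(b−a)| equals 2·(b−x)·(x−a)/(b−a); the supremum is attained by the tent function f(t) = (x − a) − |t − x|. -/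
/-- Exact power function of piecewise linear interpolation with respect to the
seminorm `‖f'‖_∞`: the worst-case error at `x` over all `1`-Lipschitz functions
on `[a, b]` equals `2 (b - x) (x - a) / (b - a)`, and the supremum is attained
by the tent function `f t = (x - a) - |t - x|`. -/
theorem linear_interpolation_power_function
    (a b x : ℝ) (hax : a < x) (hxb : x < b) :
    sSup {r : ℝ | ∃ f : ℝ → ℝ,
        (∀ s ∈ Set.Icc a b, ∀ t ∈ Set.Icc a b, |f s - f t| ≤ |s - t|) ∧
        r = |f x - ((b - x) * f a + (x - a) * f b) / (b - a)|}
      = 2 * (b - x) * (x - a) / (b - a) ∧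
    (∀ s ∈ Set.Icc a b, ∀ t ∈ Set.Icc a b,
        |((x - a) - |s - x|) - ((x - a) - |t - x|)| ≤ |s - t|) ∧
    |((x - a) - |x - x|) -
        ((b - x) * ((x - a) - |a - x|) + (x - a) * ((x - a) - |b - x|)) / (b - a)|
      = 2 * (b - x) * (x - a) / (b - a) := by
  have hab : a < b := hax.trans hxb
  have hba : (0:ℝ) < b - a := by linarith
  have htent : ∀ s ∈ Set.Icc a b, ∀ t ∈ Set.Icc a b,
      |((x - a) - |s - x|) - ((x - a) - |t - x|)| ≤ |s - t| := by
    intro s _ t _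
    have h : ((x - a) - |s - x|) - ((x - a) - |t - x|) = |t - x| - |s - x| := by ring
    rw [h]
    calc |(|t - x| - |s - x|)| ≤ |(t - x) - (s - x)| := abs_abs_sub_abs_le_abs_sub _ _
      _ = |s - t| := by rw [← abs_neg]; ring_nf
  have hval : |((x - a) - |x - x|) -
        ((b - x) * ((x - a) - |a - x|) + (x - a) * ((x - a) - |b - x|)) / (b - a)|
      = 2 * (b - x) * (x - a) / (b - a) := by
    have h1 : |x - x| = 0 := by simp
    have h2 : |a - x| = x - a := by rw [abs_sub_comm]; exact abs_of_pos (by linarith)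
    have h3 : |b - x| = b - x := abs_of_pos (by linarith)
    rw [h1, h2, h3]
    have heq : ((x - a) - 0) -
        ((b - x) * ((x - a) - (x - a)) + (x - a) * ((x - a) - (b - x))) / (b - a)
        = 2 * (b - x) * (x - a) / (b - a) := by
      field_simp
      ring
    rw [heq]
    exact abs_of_nonneg (div_nonneg (by nlinarith) hba.le)
  refine ⟨?_, htent, hval⟩
  set S := {r : ℝ | ∃ f : ℝ → ℝ,
        (∀ s ∈ Set.Icc a b, ∀ t ∈ Set.Icc a b, |f s - f t| ≤ |s - t|) ∧
        r = |f x - ((b - x) * f a + (x - a) * f b) / (b - a)|} with hS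
  have hxmem : x ∈ Set.Icc a b := ⟨hax.le, hxb.le⟩
  have hamem : a ∈ Set.Icc a b := ⟨le_refl a, hab.le⟩
  have hbmem : b ∈ Set.Icc a b := ⟨hab.le, le_refl b⟩
  have hmem : (2 * (b - x) * (x - a) / (b - a)) ∈ S :=
    ⟨fun t => (x - a) - |t - x|, htent, hval.symm⟩
  have hub : ∀ r ∈ S, r ≤ 2 * (b - x) * (x - a) / (b - a) := by
    rintro r ⟨f, hf, rfl⟩
    have h1 : |f x - f a| ≤ x - a := by
      have := hf x hxmem a hamem
      rwa [abs_of_pos (show (0:ℝ) < x - a by linarith)] at this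
    have h2 : |f x - f b| ≤ b - x := by
      have := hf x hxmem b hbmem
      rwa [abs_sub_comm x b, abs_of_pos (show (0:ℝ) < b - x by linarith)] at this
    have key : f x - ((b - x) * f a + (x - a) * f b) / (b - a)
        = ((b - x) * (f x - f a) + (x - a) * (f x - f b)) / (b - a) := by
      field_simp
      ring
    rw [key, abs_div, abs_of_pos hba, div_le_div_iff_of_pos_right hba]
    calc |(b - x) * (f x - f a) + (x - a) * (f x - f b)|
        ≤ |(b - x) * (f x - f a)| + |(x - a) * (f x - f b)| := abs_add_le _ _
      _ = (b - x) * |f x - f a| + (x - a) * |f x - f b| := by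
          rw [abs_mul, abs_mul, abs_of_pos (show (0:ℝ) < b - x by linarith),
            abs_of_pos (show (0:ℝ) < x - a by linarith)]
      _ ≤ (b - x) * (x - a) + (x - a) * (b - x) := by
          gcongr <;> linarith
      _ = 2 * (b - x) * (x - a) := by ring
  exact le_antisymm (csSup_le ⟨_, hmem⟩ hub) (le_csSup ⟨_, hub⟩ hmem)
end

section
/- Let A be a symmetric positive definite real M×M matrix, c ∈ ℝ^M, and k ∈ ℝ. Then for every b ∈ ℝ^M: k − 2·⟨b, c⟩ + ⟨b, A·b⟩ ≥ k − ⟨c, A⁻¹·c⟩, with equality if and only if b = A⁻¹·c. In particular, the squared power function of symmetric collocation, obtained by choosing b as the solution of A·b = c, is minimal among the squared power functions k − 2⟨b,c⟩ + ⟨b,Ab⟩ of all (in particular unsymmetric) recovery schemes with the same data functionals. -/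
open Matrix

/-- Optimality of symmetric collocation: for a symmetric positive definite
matrix `A`, vector `c` and constant `k`, the quadratic form
`k - 2⟨b, c⟩ + ⟨b, A b⟩` is minimized exactly at `b = A⁻¹ c`, with minimal value
`k - ⟨c, A⁻¹ c⟩`. -/
theorem symmetric_collocation_optimal_power_function
    (M : ℕ) (A : Matrix (Fin M) (Fin M) ℝ) (hA : A.PosDef) (hAsymm : A.IsSymm)
    (c : Fin M → ℝ) (k : ℝ) (b : Fin M → ℝ) :
    k - c ⬝ᵥ A⁻¹.mulVec c ≤ k - 2 * (b ⬝ᵥ c) + b ⬝ᵥ A.mulVec b ∧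
    (k - 2 * (b ⬝ᵥ c) + b ⬝ᵥ A.mulVec b = k - c ⬝ᵥ A⁻¹.mulVec c
      ↔ b = A⁻¹.mulVec c) := by
  set b₀ := A⁻¹.mulVec c with hb₀
  have hinv : A * A⁻¹ = 1 := Matrix.mul_nonsing_inv A (isUnit_iff_ne_zero.mpr hA.det_pos.ne')
  have hAb₀ : A.mulVec b₀ = c := by
    rw [hb₀, Matrix.mulVec_mulVec, hinv, Matrix.one_mulVec]
  have hsymm : ∀ x y : Fin M → ℝ, x ⬝ᵥ A.mulVec y = (A.mulVec x) ⬝ᵥ y := by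
    intro x y
    rw [Matrix.dotProduct_mulVec, ← Matrix.mulVec_transpose, hAsymm.eq]
  set d := b - b₀ with hd
  have hdiff : k - 2 * (b ⬝ᵥ c) + b ⬝ᵥ A.mulVec b - (k - c ⬝ᵥ b₀)
      = d ⬝ᵥ A.mulVec d := by
    have h1 : b₀ ⬝ᵥ A.mulVec b = c ⬝ᵥ b := by rw [hsymm, hAb₀]
    have h2 : b ⬝ᵥ A.mulVec b₀ = b ⬝ᵥ c := by rw [hAb₀]
    have h3 : b₀ ⬝ᵥ A.mulVec b₀ = c ⬝ᵥ b₀ := by rw [hsymm, hAb₀]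
    have hc : c ⬝ᵥ b = b ⬝ᵥ c := dotProduct_comm _ _
    rw [hd, Matrix.mulVec_sub, sub_dotProduct, dotProduct_sub,
      dotProduct_sub, h1, h2, h3, hc]
    ring
  have hnonneg : 0 ≤ d ⬝ᵥ A.mulVec d := by
    rcases eq_or_ne d 0 with h | h
    · simp [h]
    · have := hA.dotProduct_mulVec_pos h
      simpa using this.le
  constructor
  · linarith
  · constructor
    · intro h
      have hz : d ⬝ᵥ A.mulVec d = 0 := by linarith
      by_contra hne
      have hdne : d ≠ 0 := by
        intro h0
        apply hne
        have := sub_eq_zero.mp h0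
        exact this
      have := hA.dotProduct_mulVec_pos hdne
      rw [show (star d : Fin M → ℝ) = d from rfl] at this
      linarith [this, hz.le, hz.ge]
    · intro h
      have : d = 0 := by rw [hd, h]; simp
      rw [this] at hdiff
      simp at hdiff
      linarith
end
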